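/- Let H be a mirror-symmetric (SHS = H) Hermitian matrix whose eigenvalues satisfy: every eigenvector |λₙ⟩ obeys S|λₙ⟩ = σₙ|λₙ⟩ with σₙ ∈ {+1, −1}, and e^{-iλₙt₀} = σₙ e^{iφ} for all n and some global phase φ. Then e^{-iHt₀}|1⟩ = e^{iφ}|N⟩, i.e., perfect state transfer occurs at time t₀. -/

import Mathlib

open Matrix Finset

/-- mulVec as a linear map in the matrix argument. -/
noncomputable def mulVecL {m : Type*} [Fintype m] [DecidableEq m]
    (v : m → ℂ) : Matrix m m ℂ →ₗ[ℂ] (m → ℂ) where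
  toFun M := M *ᵥ v
  map_add' A B := Matrix.add_mulVec A B v
  map_smul' a A := Matrix.smul_mulVec a A v

theorem mulVec_sum' {m : Type*} [Fintype m] {ι : Type*} (s : Finset ι)
    (A : Matrix m m ℂ) (f : ι → m → ℂ) :
    A *ᵥ (∑ n ∈ s, f n) = ∑ n ∈ s, A *ᵥ f n := by
  simp_rw [← Matrix.mulVecLin_apply]
  exact map_sum (A.mulVecLin) f s

set_option maxHeartbeats 1000000 in
theorem exp_mulVec_eigen {m : Type*} [Fintype m] [DecidableEq m]
    (A : Matrix m m ℂ) (v : m → ℂ) (μ : ℂ) (h : A *ᵥ v = μ • v) :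
    (NormedSpace.exp A) *ᵥ v = Complex.exp μ • v := by
  letI : SeminormedRing (Matrix m m ℂ) := Matrix.linftyOpSemiNormedRing
  letI : NormedRing (Matrix m m ℂ) := Matrix.linftyOpNormedRing
  letI : NormedAlgebra ℂ (Matrix m m ℂ) := Matrix.linftyOpNormedAlgebra
  have hpow : ∀ k : ℕ, (A ^ k) *ᵥ v = μ ^ k • v := by
    intro k
    induction k with
    | zero => simp
    | succ k ih =>
      rw [pow_succ, ← Matrix.mulVec_mulVec, h, Matrix.mulVec_smul, ih, smul_smul,
        pow_succ, mul_comm]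
  let L : Matrix m m ℂ →L[ℂ] (m → ℂ) := (mulVecL v).toContinuousLinearMap
  have hL : ∀ M : Matrix m m ℂ, L M = M *ᵥ v := fun M => rfl
  have hsum : Summable fun k : ℕ => (((Nat.factorial k : ℕ) : ℂ)⁻¹ • A ^ k) :=
    NormedSpace.expSeries_summable' A
  calc (NormedSpace.exp A) *ᵥ v
      = L (∑' k : ℕ, ((Nat.factorial k : ℕ) : ℂ)⁻¹ • A ^ k) := by rw [hL, NormedSpace.exp_eq_tsum ℂ]
    _ = ∑' k : ℕ, L (((Nat.factorial k : ℕ) : ℂ)⁻¹ • A ^ k) := L.map_tsum hsum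
    _ = ∑' k : ℕ, ((Nat.factorial k : ℕ) : ℂ)⁻¹ • μ ^ k • v := by
        simp_rw [_root_.map_smul, hL, hpow]
    _ = (∑' k : ℕ, ((Nat.factorial k : ℕ) : ℂ)⁻¹ • μ ^ k) • v := by
        rw [← Summable.tsum_smul_const]
        · simp_rw [smul_smul, smul_eq_mul]
        · exact NormedSpace.expSeries_summable' μ
    _ = Complex.exp μ • v := by
        rw [Complex.exp_eq_exp_ℂ, NormedSpace.exp_eq_tsum ℂ]

theorem stmt8 (N : ℕ) (H : Matrix (Fin (N+1)) (Fin (N+1)) ℂ) (hH : H.IsHermitian)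
    (S : Matrix (Fin (N+1)) (Fin (N+1)) ℂ)
    (hS : ∀ i j : Fin (N+1), S i j = if (j : ℕ) = N - (i : ℕ) then 1 else 0)
    (hsym : S * H * S = H)
    (t₀ φ : ℝ)
    (lam : Fin (N+1) → ℝ) (σ : Fin (N+1) → ℂ)
    (v : Fin (N+1) → Fin (N+1) → ℂ)
    (heig : ∀ n, H *ᵥ v n = (lam n : ℂ) • v n)
    (hflip : ∀ n, S *ᵥ v n = σ n • v n)
    (hσ : ∀ n, σ n = 1 ∨ σ n = -1)
    (hphase : ∀ n, Complex.exp (-(Complex.I * lam n * t₀)) = σ n * Complex.exp (Complex.I * φ))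
    (c : Fin (N+1) → ℂ)
    (hspan : (Pi.single (0 : Fin (N+1)) 1 : Fin (N+1) → ℂ) = ∑ n, c n • v n) :
    (NormedSpace.exp ((-(Complex.I * t₀)) • H)) *ᵥ Pi.single (0 : Fin (N+1)) 1 =
      Complex.exp (Complex.I * φ) • (Pi.single (Fin.last N) 1 : Fin (N+1) → ℂ) := by
  have heig' : ∀ n, ((-(Complex.I * t₀)) • H) *ᵥ v n = (-(Complex.I * lam n * t₀)) • v n := by
    intro n
    rw [Matrix.smul_mulVec, heig n, smul_smul]
    ring_nf
  have hexp : ∀ n, (NormedSpace.exp ((-(Complex.I * t₀)) • H)) *ᵥ v n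
      = (σ n * Complex.exp (Complex.I * φ)) • v n := by
    intro n
    rw [exp_mulVec_eigen _ _ _ (heig' n), hphase n]
  have hS0 : S *ᵥ (Pi.single (0 : Fin (N+1)) 1 : Fin (N+1) → ℂ)
      = Pi.single (Fin.last N) 1 := by
    funext i
    rw [Matrix.mulVec_single]
    have hi := i.isLt
    by_cases h : (i : ℕ) = N
    · have : i = Fin.last N := Fin.ext (by simpa using h)
      subst this
      simp [hS, Fin.val_last]
    · have h1 : N - (i : ℕ) ≠ 0 := by omega
      have h2 : i ≠ Fin.last N := fun hc => h (by simpa using congrArg Fin.val hc)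
      simp [hS, Pi.single_eq_of_ne h2, Ne.symm h1]
  calc (NormedSpace.exp ((-(Complex.I * t₀)) • H)) *ᵥ Pi.single (0 : Fin (N+1)) 1
      = (NormedSpace.exp ((-(Complex.I * t₀)) • H)) *ᵥ ∑ n, c n • v n := by rw [hspan]
    _ = ∑ n, c n • ((NormedSpace.exp ((-(Complex.I * t₀)) • H)) *ᵥ v n) := by
        rw [mulVec_sum']; simp_rw [Matrix.mulVec_smul]
    _ = ∑ n, c n • ((σ n * Complex.exp (Complex.I * φ)) • v n) := by
        simp_rw [hexp]
    _ = Complex.exp (Complex.I * φ) • ∑ n, c n • (σ n • v n) := by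
        rw [Finset.smul_sum]
        refine Finset.sum_congr rfl fun n _ => ?_
        simp only [smul_smul]
        congr 1
        ring
    _ = Complex.exp (Complex.I * φ) • ∑ n, c n • (S *ᵥ v n) := by simp_rw [hflip]
    _ = Complex.exp (Complex.I * φ) • (S *ᵥ ∑ n, c n • v n) := by
        rw [mulVec_sum']; simp_rw [Matrix.mulVec_smul]
    _ = Complex.exp (Complex.I * φ) • (Pi.single (Fin.last N) 1 : Fin (N+1) → ℂ) := by
        rw [← hspan, hS0]
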